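/- For every real x > 0, F'(x) = F(x) - 1/x. -/

import Mathlib

open MeasureTheory Real Set Filter Metric

set_option maxHeartbeats 800000

noncomputable def F (x : ℝ) : ℝ := ∫ t in Set.Ioi (0:ℝ), Real.exp (-t) / (t + x)

lemma intOn_aux (x : ℝ) (hx : 0 < x) (n : ℕ) :
    IntegrableOn (fun t => Real.exp (-t) / (t + x) ^ n) (Set.Ioi 0) := by
  have h0 : IntegrableOn (fun t : ℝ => Real.exp (-1 * t) * (1 / x ^ n)) (Set.Ioi 0) :=
    (exp_neg_integrableOn_Ioi 0 one_pos).mul_const _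
  refine MeasureTheory.Integrable.mono h0 ?_ ?_
  · apply Measurable.aestronglyMeasurable
    exact (Real.measurable_exp.comp measurable_neg).div
      ((measurable_id.add_const x).pow_const n)
  · filter_upwards [ae_restrict_mem measurableSet_Ioi] with t ht
    have ht' : (0:ℝ) < t := ht
    have htx : (0:ℝ) < t + x := by linarith
    have hxn : (0:ℝ) < x ^ n := by positivity
    have h1 : x ^ n ≤ (t + x) ^ n := pow_le_pow_left₀ hx.le (by linarith) n
    rw [Real.norm_eq_abs, Real.norm_eq_abs, abs_of_nonneg (by positivity),
      abs_of_nonneg (by positivity)]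
    rw [neg_one_mul, mul_one_div]
    exact div_le_div_of_nonneg_left (Real.exp_pos _).le hxn h1

lemma hasDeriv_F (x : ℝ) (hx : 0 < x) :
    HasDerivAt F (∫ t in Set.Ioi (0:ℝ), -(Real.exp (-t) / (t + x) ^ 2)) x := by
  have h := hasDerivAt_integral_of_dominated_loc_of_deriv_le
    (F := fun y t => Real.exp (-t) / (t + y))
    (F' := fun y t => -(Real.exp (-t) / (t + y) ^ 2))
    (bound := fun t => Real.exp (-t) * (4 / x ^ 2))
    (x₀ := x) (s := ball x (x / 2)) (μ := volume.restrict (Set.Ioi 0))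
    (ball_mem_nhds x (by positivity)) ?_ ?_ ?_ ?_ ?_ ?_
  · exact h.2
  · refine Filter.Eventually.of_forall fun y => ?_
    apply Measurable.aestronglyMeasurable
    exact (Real.measurable_exp.comp measurable_neg).div (measurable_id.add_const y)
  · simpa [IntegrableOn] using intOn_aux x hx 1
  · apply Measurable.aestronglyMeasurable
    exact ((Real.measurable_exp.comp measurable_neg).div
      ((measurable_id.add_const x).pow_const 2)).neg
  · filter_upwards [ae_restrict_mem measurableSet_Ioi] with t ht
    intro y hy
    have ht' : (0:ℝ) < t := ht
    have hy' : x / 2 < y := by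
      have := abs_lt.mp (mem_ball_iff_norm.mp hy); linarith [this.1]
    have hty : (0:ℝ) < t + y := by linarith
    have h2 : (x/2)^2 ≤ (t + y)^2 := by nlinarith
    rw [norm_neg, Real.norm_eq_abs, abs_of_nonneg (by positivity)]
    calc Real.exp (-t) / (t + y) ^ 2 ≤ Real.exp (-t) / (x/2)^2 :=
          div_le_div_of_nonneg_left (Real.exp_pos _).le (by positivity) h2
      _ = Real.exp (-t) * (4 / x ^ 2) := by ring
  · have := (exp_neg_integrableOn_Ioi 0 one_pos).mul_const (4 / x ^ 2)
    simpa [neg_one_mul] using this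
  · filter_upwards [ae_restrict_mem measurableSet_Ioi] with t ht
    intro y hy
    have ht' : (0:ℝ) < t := ht
    have hy' : x / 2 < y := by
      have := abs_lt.mp (mem_ball_iff_norm.mp hy); linarith [this.1]
    have hty : (0:ℝ) < t + y := by linarith
    have hd : HasDerivAt (fun z => Real.exp (-t) / (t + z))
        ((0 * (t + y) - Real.exp (-t) * 1) / (t + y) ^ 2) y :=
      (hasDerivAt_const y _).div ((hasDerivAt_id y).const_add t) hty.ne'
    refine hd.congr_deriv ?_
    ring

lemma ibp_key (x : ℝ) (hx : 0 < x) :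
    ∫ t in Set.Ioi (0:ℝ),
      (-(Real.exp (-t) / (t + x)) - Real.exp (-t) / (t + x) ^ 2) = 0 - 1 / x := by
  have hcont : ContinuousWithinAt (fun t => Real.exp (-t) / (t + x)) (Set.Ici 0) 0 := by
    apply ContinuousAt.continuousWithinAt
    exact (Real.continuous_exp.comp continuous_neg).continuousAt.div
      (continuousAt_id.add continuousAt_const) (by simpa using hx.ne')
  have hderiv : ∀ t ∈ Set.Ioi (0:ℝ), HasDerivAt (fun t => Real.exp (-t) / (t + x))
      (-(Real.exp (-t) / (t + x)) - Real.exp (-t) / (t + x) ^ 2) t := by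
    intro t ht
    have ht' : (0:ℝ) < t := ht
    have htx : (0:ℝ) < t + x := by linarith
    have hnum : HasDerivAt (fun t : ℝ => Real.exp (-t)) (-Real.exp (-t)) t := by
      simpa using (hasDerivAt_neg t).exp
    have hd := hnum.div ((hasDerivAt_id t).add_const x) htx.ne'
    refine hd.congr_deriv ?_
    simp only [id]
    field_simp
  have hint : IntegrableOn (fun t => -(Real.exp (-t) / (t + x)) - Real.exp (-t) / (t + x) ^ 2)
      (Set.Ioi 0) := by
    have h1 := intOn_aux x hx 1
    have h2 := intOn_aux x hx 2
    simp only [pow_one] at h1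
    exact h1.neg.sub h2
  have htend : Tendsto (fun t => Real.exp (-t) / (t + x)) atTop (nhds 0) := by
    have hg : Tendsto (fun t => Real.exp (-t) / x) atTop (nhds 0) := by
      simpa using Real.tendsto_exp_neg_atTop_nhds_zero.div_const x
    refine squeeze_zero'
      (Filter.eventually_atTop.2 ⟨0, fun t ht => div_nonneg (Real.exp_pos _).le (by linarith)⟩)
      (Filter.eventually_atTop.2 ⟨0, fun t ht => ?_⟩) hg
    have htx : (0:ℝ) < t + x := by linarith
    exact div_le_div_of_nonneg_left (Real.exp_pos _).le hx (by linarith)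
  have := integral_Ioi_of_hasDerivAt_of_tendsto hcont hderiv hint htend
  rw [this]
  norm_num

theorem stmt_3 (x : ℝ) (hx : 0 < x) : deriv F x = F x - 1 / x := by
  have h1 := intOn_aux x hx 1
  have h2 := intOn_aux x hx 2
  simp only [pow_one] at h1
  have key := ibp_key x hx
  rw [integral_sub (f := fun t => -(Real.exp (-t) / (t + x)))
    (g := fun t => Real.exp (-t) / (t + x) ^ 2) h1.neg h2, integral_neg] at key
  have hF : (∫ t in Set.Ioi (0:ℝ), Real.exp (-t) / (t + x)) = F x := rfl
  rw [(hasDeriv_F x hx).deriv, integral_neg]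
  rw [hF] at key
  linarith [key]
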